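/- Let H be a graded bialgebra over a field k (graded by the natural numbers) which is connected, i.e. its degree-zero component is one-dimensional, spanned by the unit. Then H admits an antipode, and this antipode is unique; in other words, H is a Hopf algebra in a unique way. -/

import Mathlib

open TensorProduct

namespace Stmt0Aux

open Coalgebra

variable {k H : Type*} [Field k] [Ring H] [Bialgebra k H]

/-- Convolution product on `End(H)`. -/
noncomputable def conv (f g : H →ₗ[k] H) : H →ₗ[k] H :=
  LinearMap.mul' k H ∘ₗ TensorProduct.map f g ∘ₗ Coalgebra.comul

/-- The convolution unit `u ∘ ε`. -/
noncomputable def cu : H →ₗ[k] H := Algebra.linearMap k H ∘ₗ Coalgebra.counit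

lemma conv_cu_left (f : H →ₗ[k] H) : conv cu f = f := by
  have h1 : TensorProduct.map (cu (k:=k) (H:=H)) f
      = TensorProduct.map (Algebra.linearMap k H) f ∘ₗ (Coalgebra.counit (R:=k)).rTensor H := by
    rw [cu, LinearMap.rTensor, ← TensorProduct.map_comp, LinearMap.comp_id]
  rw [conv, h1, LinearMap.comp_assoc, Coalgebra.rTensor_counit_comp_comul]
  ext x
  simp

lemma conv_cu_right (f : H →ₗ[k] H) : conv f cu = f := by
  have h1 : TensorProduct.map f (cu (k:=k) (H:=H))
      = TensorProduct.map f (Algebra.linearMap k H) ∘ₗ (Coalgebra.counit (R:=k)).lTensor H := by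
    rw [cu, LinearMap.lTensor, ← TensorProduct.map_comp, LinearMap.comp_id]
  rw [conv, h1, LinearMap.comp_assoc, Coalgebra.lTensor_counit_comp_comul]
  ext x
  simp

lemma mul'_assoc' : LinearMap.mul' k H ∘ₗ (LinearMap.mul' k H).rTensor H
    = LinearMap.mul' k H ∘ₗ (LinearMap.mul' k H).lTensor H
        ∘ₗ (TensorProduct.assoc k H H H).toLinearMap := by
  apply TensorProduct.ext_threefold
  intro x y z
  simp [mul_assoc]

lemma conv_assoc (f g h : H →ₗ[k] H) :
    conv (conv f g) h = conv f (conv g h) := by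
  have e1 : TensorProduct.map (conv f g) h
      = (LinearMap.mul' k H).rTensor H ∘ₗ TensorProduct.map (TensorProduct.map f g) h
          ∘ₗ (Coalgebra.comul (R:=k)).rTensor H := by
    rw [conv, LinearMap.rTensor, LinearMap.rTensor]
    rw [← TensorProduct.map_comp, ← TensorProduct.map_comp]
    simp
  have e2 : TensorProduct.map f (conv g h)
      = (LinearMap.mul' k H).lTensor H ∘ₗ TensorProduct.map f (TensorProduct.map g h)
          ∘ₗ (Coalgebra.comul (R:=k)).lTensor H := by
    rw [conv, LinearMap.lTensor, LinearMap.lTensor]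
    rw [← TensorProduct.map_comp, ← TensorProduct.map_comp]
    simp
  show LinearMap.mul' k H ∘ₗ TensorProduct.map (conv f g) h ∘ₗ Coalgebra.comul
      = LinearMap.mul' k H ∘ₗ TensorProduct.map f (conv g h) ∘ₗ Coalgebra.comul
  rw [e1, e2]
  calc LinearMap.mul' k H ∘ₗ ((LinearMap.mul' k H).rTensor H
        ∘ₗ TensorProduct.map (TensorProduct.map f g) h
          ∘ₗ (Coalgebra.comul (R:=k)).rTensor H) ∘ₗ Coalgebra.comul
      = (LinearMap.mul' k H ∘ₗ (LinearMap.mul' k H).rTensor H)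
        ∘ₗ TensorProduct.map (TensorProduct.map f g) h
          ∘ₗ (Coalgebra.comul (R:=k)).rTensor H ∘ₗ Coalgebra.comul := by
        simp only [LinearMap.comp_assoc]
    _ = (LinearMap.mul' k H ∘ₗ (LinearMap.mul' k H).lTensor H)
        ∘ₗ (TensorProduct.map f (TensorProduct.map g h)
          ∘ₗ (TensorProduct.assoc k H H H).toLinearMap)
          ∘ₗ (Coalgebra.comul (R:=k)).rTensor H ∘ₗ Coalgebra.comul := by
        rw [mul'_assoc', TensorProduct.map_map_comp_assoc_eq]
        simp only [LinearMap.comp_assoc]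
    _ = LinearMap.mul' k H ∘ₗ ((LinearMap.mul' k H).lTensor H
        ∘ₗ TensorProduct.map f (TensorProduct.map g h)
          ∘ₗ (Coalgebra.comul (R:=k)).lTensor H) ∘ₗ Coalgebra.comul := by
        simp only [LinearMap.comp_assoc, Coalgebra.coassoc]

lemma conv_add_left (f f' g : H →ₗ[k] H) : conv (f + f') g = conv f g + conv f' g := by
  simp only [conv, TensorProduct.map_add_left, LinearMap.add_comp, LinearMap.comp_add]

lemma conv_add_right (f g g' : H →ₗ[k] H) : conv f (g + g') = conv f g + conv f g' := by
  simp only [conv, TensorProduct.map_add_right, LinearMap.add_comp, LinearMap.comp_add]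

lemma conv_smul_left (c : k) (f g : H →ₗ[k] H) : conv (c • f) g = c • conv f g := by
  simp only [conv, TensorProduct.map_smul_left, LinearMap.smul_comp, LinearMap.comp_smul]

lemma conv_smul_right (c : k) (f g : H →ₗ[k] H) : conv f (c • g) = c • conv f g := by
  simp only [conv, TensorProduct.map_smul_right, LinearMap.smul_comp, LinearMap.comp_smul]

lemma conv_sum_left {ι : Type*} (s : Finset ι) (f : ι → (H →ₗ[k] H)) (g : H →ₗ[k] H) :
    conv (∑ i ∈ s, f i) g = ∑ i ∈ s, conv (f i) g := by
  classical
  induction s using Finset.induction_on with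
  | empty => simp [conv]
  | insert _ _ h ih => simp [Finset.sum_insert h, conv_add_left, ih]

lemma conv_sum_right {ι : Type*} (s : Finset ι) (f : H →ₗ[k] H) (g : ι → (H →ₗ[k] H)) :
    conv f (∑ i ∈ s, g i) = ∑ i ∈ s, conv f (g i) := by
  classical
  induction s using Finset.induction_on with
  | empty => simp [conv]
  | insert _ _ h ih => simp [Finset.sum_insert h, conv_add_right, ih]

/-- Convolution powers of `id - u∘ε`. -/
noncomputable def fpow : ℕ → (H →ₗ[k] H)
  | 0 => cu
  | n+1 => conv (LinearMap.id - cu) (fpow n)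

lemma fpow_succ_right (n : ℕ) :
    fpow (n+1) = conv (fpow n) (LinearMap.id - cu (k:=k) (H:=H)) := by
  induction n with
  | zero =>
    show conv (LinearMap.id - cu) cu = conv cu (LinearMap.id - cu)
    rw [conv_cu_right, conv_cu_left]
  | succ n ih =>
    calc fpow (n+2) = conv (LinearMap.id - cu) (conv (fpow n) (LinearMap.id - cu)) := by
          rw [show fpow (n+2) = conv (LinearMap.id - cu) (fpow (n+1)) from rfl, ih]
      _ = conv (conv (LinearMap.id - cu) (fpow n)) (LinearMap.id - cu) :=
          (conv_assoc _ _ _).symm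
      _ = conv (fpow (n+1)) (LinearMap.id - cu) := rfl

section Graded

variable (𝒜 : ℕ → Submodule k H)

lemma f_zero (hone : 𝒜 0 = Submodule.span k {1}) {x : H} (hx : x ∈ 𝒜 0) :
    (LinearMap.id - cu : H →ₗ[k] H) x = 0 := by
  rw [hone, Submodule.mem_span_singleton] at hx
  obtain ⟨c, rfl⟩ := hx
  simp only [LinearMap.sub_apply, LinearMap.id_coe, id_eq, cu, LinearMap.comp_apply,
    map_smul, Bialgebra.counit_one, Algebra.linearMap_apply, map_one,
    Algebra.algebraMap_eq_smul_one, smul_eq_mul, mul_one, sub_self, smul_zero]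

lemma apply_comul_eq_zero
    (hcomul : ∀ n : ℕ, ∀ x ∈ 𝒜 n,
      Coalgebra.comul (R := k) x ∈
        ⨆ p : {p : ℕ × ℕ // p.1 + p.2 = n},
          LinearMap.range (TensorProduct.mapIncl (𝒜 p.1.1) (𝒜 p.1.2)))
    {n : ℕ} {x : H} (hx : x ∈ 𝒜 n) (g : H ⊗[k] H →ₗ[k] H)
    (hg : ∀ p q, p + q = n → ∀ a ∈ 𝒜 p, ∀ b ∈ 𝒜 q, g (a ⊗ₜ b) = 0) :
    g (Coalgebra.comul (R := k) x) = 0 := by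
  have hsup : (⨆ p : {p : ℕ × ℕ // p.1 + p.2 = n},
      LinearMap.range (TensorProduct.mapIncl (𝒜 p.1.1) (𝒜 p.1.2))) ≤ LinearMap.ker g := by
    apply iSup_le
    rintro ⟨⟨p, q⟩, hpq⟩
    rw [LinearMap.range_le_ker_iff]
    apply TensorProduct.ext'
    rintro ⟨a, ha⟩ ⟨b, hb⟩
    exact hg p q hpq a ha b hb
  exact hsup (hcomul n x hx)

lemma fpow_kill (hone : 𝒜 0 = Submodule.span k {1})
    (hcomul : ∀ n : ℕ, ∀ x ∈ 𝒜 n,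
      Coalgebra.comul (R := k) x ∈
        ⨆ p : {p : ℕ × ℕ // p.1 + p.2 = n},
          LinearMap.range (TensorProduct.mapIncl (𝒜 p.1.1) (𝒜 p.1.2))) :
    ∀ m n : ℕ, n < m → ∀ x ∈ 𝒜 n, fpow (k:=k) (H:=H) m x = 0 := by
  intro m
  induction m with
  | zero => omega
  | succ m ih =>
    intro n hn x hx
    show (LinearMap.mul' k H ∘ₗ TensorProduct.map (LinearMap.id - cu) (fpow m))
        (Coalgebra.comul (R:=k) x) = 0
    apply apply_comul_eq_zero 𝒜 hcomul hx
    intro p q hpq a ha b hb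
    rcases Nat.eq_zero_or_pos p with hp | hp
    · subst hp
      have h := f_zero 𝒜 hone ha
      simp only [LinearMap.comp_apply, TensorProduct.map_tmul, LinearMap.mul'_apply]
      rw [h, zero_mul]
    · have hq : q < m := by omega
      simp [ih q hq b hb]

/-- Partial geometric series `∑_{i ≤ n} (-1)^i f^{⋆i}`. -/
noncomputable def Spart (n : ℕ) : H →ₗ[k] H :=
  ∑ i ∈ Finset.range (n+1), ((-1:k)^i) • fpow i

lemma Spart_agree (hone : 𝒜 0 = Submodule.span k {1})
    (hcomul : ∀ n : ℕ, ∀ x ∈ 𝒜 n,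
      Coalgebra.comul (R := k) x ∈
        ⨆ p : {p : ℕ × ℕ // p.1 + p.2 = n},
          LinearMap.range (TensorProduct.mapIncl (𝒜 p.1.1) (𝒜 p.1.2)))
    {N n : ℕ} (hn : n ≤ N) {x : H} (hx : x ∈ 𝒜 n) :
    Spart (k:=k) (H:=H) N x = Spart (k:=k) (H:=H) n x := by
  simp only [Spart, LinearMap.sum_apply, LinearMap.smul_apply]
  symm
  apply Finset.sum_subset
  · intro i hi
    simp only [Finset.mem_range] at *
    omega
  · intro i _ hi
    simp only [Finset.mem_range] at hi
    rw [fpow_kill 𝒜 hone hcomul i n (by omega) x hx, smul_zero]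

lemma tele (n : ℕ) :
    Spart (k:=k) (H:=H) n + ∑ i ∈ Finset.range (n+1), ((-1:k)^i) • fpow (i+1)
      = cu + ((-1:k)^n) • fpow (n+1) := by
  induction n with
  | zero =>
    simp [Spart]
    rfl
  | succ n ih =>
    rw [Spart, Finset.sum_range_succ, Finset.sum_range_succ
      (f := fun i => ((-1:k)^i) • fpow (i+1)), ← Spart]
    have h2 : ((-1:k)^(n+1)) • (fpow (n+1) : H →ₗ[k] H) = -(((-1:k)^n) • fpow (n+1)) := by
      rw [pow_succ]
      simp [neg_smul, smul_smul, mul_comm]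
      exact neg_smul ((-1:k)^n) (fpow (k:=k) (H:=H) (n+1))
    calc (Spart n + (-1:k)^(n+1) • fpow (n+1))
          + (∑ i ∈ Finset.range (n+1), ((-1:k)^i) • fpow (i+1) + (-1:k)^(n+1) • fpow (n+2))
        = (Spart n + ∑ i ∈ Finset.range (n+1), ((-1:k)^i) • fpow (i+1))
          + ((-1:k)^(n+1) • fpow (n+1) + (-1:k)^(n+1) • fpow (n+2)) := by abel
      _ = cu + ((-1:k)^n) • fpow (n+1)
          + ((-1:k)^(n+1) • fpow (n+1) + (-1:k)^(n+1) • fpow (n+2)) := by rw [ih]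
      _ = cu + ((-1:k)^(n+1)) • fpow (n+2) := by rw [h2]; abel

lemma expand_right (n : ℕ) :
    conv LinearMap.id (Spart (k:=k) (H:=H) n) = cu + ((-1:k)^n) • fpow (n+1) := by
  have h0 : conv (LinearMap.id - cu) (Spart (k:=k) (H:=H) n)
      = ∑ i ∈ Finset.range (n+1), ((-1:k)^i) • fpow (i+1) := by
    rw [Spart, conv_sum_right]
    refine Finset.sum_congr rfl fun i _ => ?_
    rw [conv_smul_right]
    rfl
  have h1 : (LinearMap.id : H →ₗ[k] H) = (LinearMap.id - cu) + cu := by rw [sub_add_cancel]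
  rw [h1, conv_add_left, conv_cu_left, h0, add_comm, tele]

lemma expand_left (n : ℕ) :
    conv (Spart (k:=k) (H:=H) n) LinearMap.id = cu + ((-1:k)^n) • fpow (n+1) := by
  have h0 : conv (Spart (k:=k) (H:=H) n) (LinearMap.id - cu)
      = ∑ i ∈ Finset.range (n+1), ((-1:k)^i) • fpow (i+1) := by
    rw [Spart, conv_sum_left]
    refine Finset.sum_congr rfl fun i _ => ?_
    rw [conv_smul_left, ← fpow_succ_right]
  have h1 : (LinearMap.id : H →ₗ[k] H) = (LinearMap.id - cu) + cu := by rw [sub_add_cancel]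
  rw [h1, conv_add_right, conv_cu_right, h0, add_comm, tele]

end Graded

end Stmt0Aux

/-- A connected graded bialgebra over a field admits a unique antipode, i.e. it is a
Hopf algebra in a unique way. -/
theorem stmt0 {k H : Type*} [Field k] [Ring H] [Bialgebra k H]
    (𝒜 : ℕ → Submodule k H)
    (hinternal : DirectSum.IsInternal 𝒜)
    (hone : 𝒜 0 = Submodule.span k {1})
    (hmul : ∀ i j : ℕ, ∀ x ∈ 𝒜 i, ∀ y ∈ 𝒜 j, x * y ∈ 𝒜 (i + j))
    (hcomul : ∀ n : ℕ, ∀ x ∈ 𝒜 n,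
      Coalgebra.comul (R := k) x ∈
        ⨆ p : {p : ℕ × ℕ // p.1 + p.2 = n},
          LinearMap.range (TensorProduct.mapIncl (𝒜 p.1.1) (𝒜 p.1.2)))
    (hcounit : ∀ n : ℕ, 0 < n → ∀ x ∈ 𝒜 n, Coalgebra.counit (R := k) x = 0) :
    ∃! S : H →ₗ[k] H,
      (LinearMap.mul' k H) ∘ₗ (TensorProduct.map S LinearMap.id) ∘ₗ Coalgebra.comul
        = (Algebra.linearMap k H) ∘ₗ Coalgebra.counit ∧
      (LinearMap.mul' k H) ∘ₗ (TensorProduct.map LinearMap.id S) ∘ₗ Coalgebra.comul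
        = (Algebra.linearMap k H) ∘ₗ Coalgebra.counit := by
  classical
  -- the decomposition equivalence
  let E : (DirectSum ℕ fun n => 𝒜 n) ≃ₗ[k] H :=
    LinearEquiv.ofBijective (DirectSum.coeLinearMap 𝒜) hinternal
  let T : H →ₗ[k] H :=
    (DirectSum.toModule k ℕ H (fun n => Stmt0Aux.Spart (k:=k) (H:=H) n ∘ₗ (𝒜 n).subtype)) ∘ₗ E.symm.toLinearMap
  have Tval : ∀ (n : ℕ) (x : H), x ∈ 𝒜 n → T x = Stmt0Aux.Spart (k:=k) (H:=H) n x := by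
    intro n x hx
    have hE : E.symm x = DirectSum.lof k ℕ (fun i => 𝒜 i) n ⟨x, hx⟩ := by
      rw [LinearEquiv.symm_apply_eq]
      show x = DirectSum.coeLinearMap 𝒜 (DirectSum.lof k ℕ (fun i => 𝒜 i) n ⟨x, hx⟩)
      rw [DirectSum.lof_eq_of, DirectSum.coeLinearMap_of]
    show (DirectSum.toModule k ℕ H (fun n => Stmt0Aux.Spart (k:=k) (H:=H) n ∘ₗ (𝒜 n).subtype)) (E.symm x)
        = Stmt0Aux.Spart (k:=k) (H:=H) n x
    rw [hE, DirectSum.toModule_lof]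
    rfl
  -- extensionality from the grading
  have ext_graded : ∀ {φ ψ : H →ₗ[k] H}, (∀ n, ∀ x ∈ 𝒜 n, φ x = ψ x) → φ = ψ := by
    intro φ ψ h
    ext x
    have hx : x ∈ (⨆ n, 𝒜 n) := by
      rw [hinternal.submodule_iSup_eq_top]; trivial
    refine Submodule.iSup_induction 𝒜 (motive := fun y => φ y = ψ y) hx h (by simp) ?_
    intro a b ha hb
    show φ (a + b) = ψ (a + b)
    rw [map_add, map_add]
    show φ a + φ b = ψ a + ψ b
    rw [ha, hb]
  -- the two antipode identities for T
  have right_inv : Stmt0Aux.conv LinearMap.id T = Stmt0Aux.cu := by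
    apply ext_graded
    intro n x hx
    have step1 : Stmt0Aux.conv LinearMap.id T x
        = Stmt0Aux.conv LinearMap.id (Stmt0Aux.Spart (k:=k) (H:=H) n) x := by
      have hdiff : Stmt0Aux.conv LinearMap.id (T - Stmt0Aux.Spart (k:=k) (H:=H) n) x = 0 := by
        show (LinearMap.mul' k H ∘ₗ TensorProduct.map LinearMap.id (T - Stmt0Aux.Spart (k:=k) (H:=H) n))
            (Coalgebra.comul (R:=k) x) = 0
        apply Stmt0Aux.apply_comul_eq_zero 𝒜 hcomul hx
        intro p q hpq a ha b hb
        have : T b - Stmt0Aux.Spart (k:=k) (H:=H) n b = 0 := by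
          rw [Tval q b hb, Stmt0Aux.Spart_agree 𝒜 hone hcomul (N:=n) (n:=q) (by omega) hb, sub_self]
        simp only [LinearMap.comp_apply, TensorProduct.map_tmul, LinearMap.mul'_apply,
          LinearMap.sub_apply, LinearMap.id_coe, id_eq, this, mul_zero]
      have := Stmt0Aux.conv_add_right (k:=k) (H:=H) LinearMap.id (T - Stmt0Aux.Spart (k:=k) (H:=H) n)
        (Stmt0Aux.Spart (k:=k) (H:=H) n)
      rw [sub_add_cancel] at this
      rw [this]
      simp [hdiff]
    rw [step1, Stmt0Aux.expand_right]
    simp only [LinearMap.add_apply, LinearMap.smul_apply]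
    rw [Stmt0Aux.fpow_kill 𝒜 hone hcomul (n+1) n (by omega) x hx, smul_zero, add_zero]
  have left_inv : Stmt0Aux.conv T LinearMap.id = Stmt0Aux.cu := by
    apply ext_graded
    intro n x hx
    have step1 : Stmt0Aux.conv T LinearMap.id x
        = Stmt0Aux.conv (Stmt0Aux.Spart (k:=k) (H:=H) n) LinearMap.id x := by
      have hdiff : Stmt0Aux.conv (T - Stmt0Aux.Spart (k:=k) (H:=H) n) LinearMap.id x = 0 := by
        show (LinearMap.mul' k H ∘ₗ TensorProduct.map (T - Stmt0Aux.Spart (k:=k) (H:=H) n) LinearMap.id)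
            (Coalgebra.comul (R:=k) x) = 0
        apply Stmt0Aux.apply_comul_eq_zero 𝒜 hcomul hx
        intro p q hpq a ha b hb
        have : T a - Stmt0Aux.Spart (k:=k) (H:=H) n a = 0 := by
          rw [Tval p a ha, Stmt0Aux.Spart_agree 𝒜 hone hcomul (N:=n) (n:=p) (by omega) ha, sub_self]
        simp only [LinearMap.comp_apply, TensorProduct.map_tmul, LinearMap.mul'_apply,
          LinearMap.sub_apply, LinearMap.id_coe, id_eq, this, zero_mul]
      have := Stmt0Aux.conv_add_left (k:=k) (H:=H) (T - Stmt0Aux.Spart (k:=k) (H:=H) n)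
        (Stmt0Aux.Spart n) LinearMap.id
      rw [sub_add_cancel] at this
      rw [this]
      simp [hdiff]
    rw [step1, Stmt0Aux.expand_left]
    simp only [LinearMap.add_apply, LinearMap.smul_apply]
    rw [Stmt0Aux.fpow_kill 𝒜 hone hcomul (n+1) n (by omega) x hx, smul_zero, add_zero]
  refine ⟨T, ⟨left_inv, right_inv⟩, ?_⟩
  intro S' ⟨hS'l, hS'r⟩
  -- S' = S' ⋆ cu = S' ⋆ (id ⋆ T) = (S' ⋆ id) ⋆ T = cu ⋆ T = T
  have h1 : Stmt0Aux.conv S' LinearMap.id = Stmt0Aux.cu := hS'l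
  calc S' = Stmt0Aux.conv S' Stmt0Aux.cu := (Stmt0Aux.conv_cu_right S').symm
    _ = Stmt0Aux.conv S' (Stmt0Aux.conv LinearMap.id T) := by rw [right_inv]
    _ = Stmt0Aux.conv (Stmt0Aux.conv S' LinearMap.id) T := (Stmt0Aux.conv_assoc _ _ _).symm
    _ = Stmt0Aux.conv Stmt0Aux.cu T := by rw [h1]
    _ = T := Stmt0Aux.conv_cu_left T
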